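/- Every formula of communication pattern logic is equivalent to one in iterated update normal form, where every dynamic modality [𝐑ⁿ,σ] is applied only to a formula of the static language (without dynamic modalities); the translation t defined via the reduction axioms, in particular t([𝐑,R]D_B φ) = ⋀_{R'B ≡ RB} D_{RB} t([𝐑,R']φ), preserves logical equivalence. -/

import Mathlib

namespace Stmt17

/-- An epistemic model: worlds, relations for each agent, valuation. -/
structure EM (A P : Type) where
  W : Type
  sim : A → W → W → Prop
  L : W → Set P

/-- The language `ℒ°` of communication pattern logic:
`p | ¬φ | φ∧φ | D_B φ | [𝐑,R]φ` with `R ∈ 𝐑`. -/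
inductive Form (A P : Type) : Type
  | atom : P → Form A P
  | neg : Form A P → Form A P
  | conj : Form A P → Form A P → Form A P
  | dk : Set A → Form A P → Form A P
  | cpat : (CG : Set (A → A → Prop)) → (R : A → A → Prop) → R ∈ CG →
      Form A P → Form A P

/-- The update `M ⊙ 𝐑`: worlds `W × 𝐑`, `(w,R) ∼̇_a (w',R')` iff `Ra = R'a` and
`w ∼_{Ra} w'`, valuation unchanged. -/
def update {A P : Type} (M : EM A P) (CG : Set (A → A → Prop)) : EM A P where
  W := M.W × {R // R ∈ CG}
  sim a x y := ({b | x.2.1 b a} = {b | y.2.1 b a}) ∧ ∀ b, x.2.1 b a → M.sim b x.1 y.1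
  L x := M.L x.1

/-- Satisfaction: `M,w ⊨ [𝐑,R]φ` iff `M ⊙ 𝐑,(w,R) ⊨ φ`. -/
def Sat {A P : Type} : Form A P → (M : EM A P) → M.W → Prop
  | .atom p, M, w => p ∈ M.L w
  | .neg f, M, w => ¬ Sat f M w
  | .conj f g, M, w => Sat f M w ∧ Sat g M w
  | .dk B f, M, w => ∀ v, (∀ a ∈ B, M.sim a w v) → Sat f M v
  | .cpat CG R h f, M, w => Sat f (update M CG) (w, ⟨R, h⟩)

/-- Static formulas: no dynamic modalities. -/
inductive Static {A P : Type} : Form A P → Prop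
  | atom (p : P) : Static (.atom p)
  | neg {f} : Static f → Static (.neg f)
  | conj {f g} : Static f → Static g → Static (.conj f g)
  | dk {B f} : Static f → Static (.dk B f)

/-- `[𝐑ⁿ,σ]ψ`: a (possibly empty) sequence of modalities from one pattern `𝐑`
applied to a static formula. -/
inductive Chain {A P : Type} (CG : Set (A → A → Prop)) : Form A P → Prop
  | base {f} : Static f → Chain CG f
  | step {f} (R : A → A → Prop) (h : R ∈ CG) :
      Chain CG f → Chain CG (.cpat CG R h f)

/-- Iterated update normal form: `φ := p | ¬φ | φ∧φ | D_B φ | [𝐑ⁿ,σ]ψ` with `ψ`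
static. -/
inductive IUNF {A P : Type} : Form A P → Prop
  | atom (p : P) : IUNF (.atom p)
  | neg {f} : IUNF f → IUNF (.neg f)
  | conj {f g} : IUNF f → IUNF g → IUNF (.conj f g)
  | dk {B f} : IUNF f → IUNF (.dk B f)
  | chain (CG) {f} : Chain CG f → IUNF f

open Classical in
noncomputable instance : Finite Prop := Finite.of_equiv Bool Equiv.propEquivBool.symm

section FinCase
variable {A P : Type}

/-- conjunction of a list with a default conjunct -/
def conjList (d : Form A P) : List (Form A P) → Form A P
  | [] => d
  | h :: t => .conj h (conjList d t)

lemma Sat_conjList (d : Form A P) (l : List (Form A P)) (M : EM A P) (w : M.W) :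
    Sat (conjList d l) M w ↔ Sat d M w ∧ ∀ φ ∈ l, Sat φ M w := by
  induction l with
  | nil => simp [conjList]
  | cons h t ih =>
      simp only [conjList, Sat, ih, List.mem_cons]
      constructor
      · rintro ⟨h1, h2, h3⟩
        exact ⟨h2, fun φ hφ => hφ.elim (fun e => e ▸ h1) (h3 φ)⟩
      · rintro ⟨h1, h2⟩
        exact ⟨h2 h (Or.inl rfl), h1, fun φ hφ => h2 φ (Or.inr hφ)⟩

variable [Finite A]

/-- the set of patterns in `CG` agreeing with `R` on the columns of `B` -/
def matchSet (CG : Set (A → A → Prop)) (B : Set A) (R : A → A → Prop) :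
    Set (A → A → Prop) :=
  {T | T ∈ CG ∧ ∀ a ∈ B, {b | T b a} = {b | R b a}}

noncomputable def pushF (CG : Set (A → A → Prop)) : (A → A → Prop) → Form A P → Form A P
  | _, .atom p => .atom p
  | R, .neg ψ => .neg (pushF CG R ψ)
  | R, .conj ψ₁ ψ₂ => .conj (pushF CG R ψ₁) (pushF CG R ψ₂)
  | R, .dk B ψ =>
      conjList (.dk {b | ∃ a ∈ B, R b a} (pushF CG R ψ))
        (((Set.toFinite (matchSet CG B R)).toFinset.toList).map
          (fun T => .dk {b | ∃ a ∈ B, R b a} (pushF CG T ψ)))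
  | R, .cpat CG' R' h' ψ => .cpat CG' R' h' ψ

lemma conjList_static {d : Form A P} {l : List (Form A P)} (hd : Static d)
    (hl : ∀ φ ∈ l, Static φ) : Static (conjList d l) := by
  induction l with
  | nil => exact hd
  | cons h t ih =>
      exact Static.conj (hl h List.mem_cons_self)
        (ih fun φ hφ => hl φ (List.mem_cons_of_mem h hφ))

lemma pushF_static (CG : Set (A → A → Prop)) :
    ∀ {ψ : Form A P}, Static ψ → ∀ R, Static (pushF CG R ψ) := by
  intro ψ hψ
  induction hψ with
  | atom p => exact fun R => Static.atom p
  | neg _ ih => exact fun R => Static.neg (ih R)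
  | conj _ _ ih1 ih2 => exact fun R => Static.conj (ih1 R) (ih2 R)
  | dk _ ih =>
      intro R
      unfold pushF
      apply conjList_static
      · exact Static.dk (ih R)
      · intro φ hφ
        simp only [List.mem_map] at hφ
        obtain ⟨T, _, rfl⟩ := hφ
        exact Static.dk (ih T)

lemma pushF_correct (CG : Set (A → A → Prop)) (M : EM A P) :
    ∀ {ψ : Form A P}, Static ψ → ∀ (R : A → A → Prop) (h : R ∈ CG) (w : M.W),
      Sat ψ (update M CG) (w, ⟨R, h⟩) ↔ Sat (pushF CG R ψ) M w := by
  intro ψ hψ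
  induction hψ with
  | atom p => intro R h w; exact Iff.rfl
  | neg _ ih => intro R h w; exact not_congr (ih R h w)
  | conj _ _ ih1 ih2 => intro R h w; exact and_congr (ih1 R h w) (ih2 R h w)
  | dk _ ih =>
      intro R h w
      rename_i B ψ₀ _
      show (∀ v : (update M CG).W, _ → _) ↔ _
      rw [pushF, Sat_conjList]
      constructor
      · intro H
        constructor
        · intro v hv
          rw [← ih R h v]
          exact H (v, ⟨R, h⟩) (fun a _ => ⟨rfl, fun b hb => hv b ⟨a, ‹_›, hb⟩⟩)
        · intro φ hφ
          simp only [List.mem_map, Set.Finite.mem_toFinset, Finset.mem_toList] at hφ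
          obtain ⟨T, hT, rfl⟩ := hφ
          intro v hv
          rw [← ih T hT.1 v]
          refine H (v, ⟨T, hT.1⟩) (fun a ha => ⟨(hT.2 a ha).symm, fun b hb => hv b ⟨a, ha, hb⟩⟩)
      · rintro ⟨-, H⟩ ⟨v, T, hT⟩ hsim
        have hmem : T ∈ matchSet CG B R := by
          refine ⟨hT, fun a ha => ?_⟩
          exact ((hsim a ha).1).symm
        have := H (.dk {b | ∃ a ∈ B, R b a} (pushF CG T ψ₀)) (by
          simp only [List.mem_map, Set.Finite.mem_toFinset, Finset.mem_toList]
          exact ⟨T, hmem, rfl⟩)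
        have hv : ∀ b, (∃ a ∈ B, R b a) → M.sim b w v := by
          rintro b ⟨a, ha, hb⟩
          have hcol := (hsim a ha).1
          have : R b a := hb
          exact (hsim a ha).2 b this
        have := this v hv
        rwa [ih T hT v]


lemma finite_static : ∀ (f : Form A P), ∃ s : Form A P, Static s ∧
    ∀ (M : EM A P) (w : M.W), Sat f M w ↔ Sat s M w := by
  intro f
  induction f with
  | atom p => exact ⟨.atom p, .atom p, fun M w => Iff.rfl⟩
  | neg f ih =>
      obtain ⟨s, hs, he⟩ := ih
      exact ⟨.neg s, .neg hs, fun M w => not_congr (he M w)⟩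
  | conj f1 f2 ih1 ih2 =>
      obtain ⟨s1, hs1, he1⟩ := ih1
      obtain ⟨s2, hs2, he2⟩ := ih2
      exact ⟨.conj s1 s2, .conj hs1 hs2, fun M w => and_congr (he1 M w) (he2 M w)⟩
  | dk B f ih =>
      obtain ⟨s, hs, he⟩ := ih
      exact ⟨.dk B s, .dk hs, fun M w =>
        forall_congr' fun v => imp_congr Iff.rfl (he M v)⟩
  | cpat CG R h f ih =>
      obtain ⟨s, hs, he⟩ := ih
      refine ⟨pushF CG R s, pushF_static CG hs R, fun M w => ?_⟩
      exact (he (update M CG) (w, ⟨R, h⟩)).trans (pushF_correct CG M hs R h w)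

end FinCase

section Infra
variable {A P : Type}

/-- iterated update; head of the list is the outermost (last applied, "top") level -/
def updates (M : EM A P) : List (Set (A → A → Prop)) → EM A P
  | [] => M
  | CG :: l => update (updates M l) CG

/-- column union: `colU U S = ⋃_{a ∈ S} U⁻¹(a)` -/
def colU (U : A → A → Prop) (S : Set A) : Set A := {b | ∃ a ∈ S, U b a}

/-- final guard set of the cascade -/
def guardOf : Set A → List (A → A → Prop) → Set A
  | S, [] => S
  | S, U :: σ => guardOf (colU U S) σ

/-- the list of matching sets of the cascade, aligned with the stack -/
def cascL : Set A → List (A → A → Prop) → List (Set A)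
  | _, [] => []
  | S, U :: σ => S :: cascL (colU U S) σ

/-- cascade condition on two stacks (columns agree on the cascade sets) -/
def zipCond : Set A → List (A → A → Prop) → List (A → A → Prop) → Prop
  | _, [], [] => True
  | S, U :: σ, V :: σ' =>
      (∀ a ∈ S, {b | U b a} = {b | V b a}) ∧ zipCond (colU U S) σ σ'
  | _, _, _ => False

/-- build a world of the iterated update from a base world and a stack -/
def mkW {M : EM A P} : (σ : List (A → A → Prop)) → (ls : List (Set (A → A → Prop))) →
    List.Forall₂ (· ∈ ·) σ ls → M.W → (updates M ls).W
  | [], [], _, v => v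
  | U :: σ, CG :: ls, h, v =>
      (mkW σ ls (List.forall₂_cons.mp h).2 v, ⟨U, (List.forall₂_cons.mp h).1⟩)
  | [], _ :: _, h, _ => absurd h (by simp)
  | _ :: _, [], h, _ => absurd h (by simp)

lemma mkW_surj {M : EM A P} : ∀ {ls : List (Set (A → A → Prop))}
    (x : (updates M ls).W), ∃ (σ : List (A → A → Prop))
    (hσ : List.Forall₂ (· ∈ ·) σ ls) (v : M.W), x = mkW σ ls hσ v := by
  intro ls
  induction ls with
  | nil => exact fun x => ⟨[], List.Forall₂.nil, x, rfl⟩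
  | cons CG l ih =>
      rintro ⟨x, T, hT⟩
      obtain ⟨σ, hσ, v, rfl⟩ := ih x
      refine ⟨T :: σ, List.forall₂_cons.mpr ⟨hT, hσ⟩, v, ?_⟩
      simp [mkW]
      rfl

lemma updates_L {M : EM A P} : ∀ {ls : List (Set (A → A → Prop))}
    {σ : List (A → A → Prop)} (hσ : List.Forall₂ (· ∈ ·) σ ls) (v : M.W),
    (updates M ls).L (mkW σ ls hσ v) = M.L v := by
  intro ls
  induction ls with
  | nil => intro σ hσ v; cases hσ; rfl
  | cons CG l ih =>
      intro σ hσ v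
      cases σ with
      | nil => exact absurd hσ (by simp)
      | cons U σ => exact ih (List.forall₂_cons.mp hσ).2 v

/-- characterisation of simultaneous similarity in the iterated update -/
lemma sim_iff {M : EM A P} : ∀ {ls : List (Set (A → A → Prop))}
    {σ σ' : List (A → A → Prop)} (hσ : List.Forall₂ (· ∈ ·) σ ls)
    (hσ' : List.Forall₂ (· ∈ ·) σ' ls) (v v' : M.W) (B : Set A),
    (∀ a ∈ B, (updates M ls).sim a (mkW σ ls hσ v) (mkW σ' ls hσ' v')) ↔
      (zipCond B σ σ' ∧ ∀ c ∈ guardOf B σ, M.sim c v v') := by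
  intro ls
  induction ls with
  | nil =>
      intro σ σ' hσ hσ' v v' B
      cases hσ; cases hσ'
      simp only [zipCond, guardOf, true_and]
      exact Iff.rfl
  | cons CG l ih =>
      intro σ σ' hσ hσ' v v' B
      cases σ with
      | nil => exact absurd hσ (by simp)
      | cons U σ =>
        cases σ' with
        | nil => exact absurd hσ' (by simp)
        | cons V σ' =>
          simp only [zipCond, guardOf, mkW]
          have hrec := ih (List.forall₂_cons.mp hσ).2 (List.forall₂_cons.mp hσ').2 v v' (colU U B)
          constructor
          · intro H
            have h1 : ∀ a ∈ B, {b | U b a} = {b | V b a} := fun a ha => (H a ha).1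
            have h2 := hrec.1 (by
              rintro b ⟨a, ha, hb⟩
              exact (H a ha).2 b hb)
            exact ⟨⟨h1, h2.1⟩, h2.2⟩
          · rintro ⟨⟨h1, h2⟩, h3⟩ a ha
            exact ⟨h1 a ha, fun b hb => (hrec.2 ⟨h2, h3⟩) b ⟨a, ha, hb⟩⟩

end Infra

section Walk
variable {A P : Type}

/-- walk down a formula along an address, collecting the pushed patterns -/
def walk : Form A P → List (A → A → Prop) → List (Set (A → A → Prop)) →
    List Bool → Option (Form A P × List (A → A → Prop) × List (Set (A → A → Prop)))
  | φ, cs, ls, [] => some (φ, cs, ls)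
  | .neg φ, cs, ls, false :: r => walk φ cs ls r
  | .conj φ₁ _, cs, ls, false :: r => walk φ₁ cs ls r
  | .conj _ φ₂, cs, ls, true :: r => walk φ₂ cs ls r
  | .dk _ φ, cs, ls, false :: r => walk φ cs ls r
  | .cpat CG R _ φ, cs, ls, false :: r => walk φ (R :: cs) (CG :: ls) r
  | _, _, _, _ => none

lemma walk_append (r₂ : List Bool) : ∀ (r₁ : List Bool) (φ : Form A P) cs ls,
    walk φ cs ls (r₁ ++ r₂) = (walk φ cs ls r₁).bind
      (fun x => walk x.1 x.2.1 x.2.2 r₂) := by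
  intro r₁
  induction r₁ with
  | nil => intro φ cs ls; simp [walk]
  | cons b r ih =>
      intro φ cs ls
      cases φ <;> cases b <;> simp [walk, ih]

/-- the collected data only grows, with memberships, and is context independent -/
lemma walk_mono : ∀ (r : List Bool) (φ : Form A P) cs ls φ' cs' ls',
    walk φ cs ls r = some (φ', cs', ls') →
    ∃ Δc Δl, cs' = Δc ++ cs ∧ ls' = Δl ++ ls ∧ List.Forall₂ (· ∈ ·) Δc Δl ∧
      ∀ cs₀ ls₀, walk φ cs₀ ls₀ r = some (φ', Δc ++ cs₀, Δl ++ ls₀) := by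
  intro r
  induction r with
  | nil =>
      intro φ cs ls φ' cs' ls' h
      simp only [walk, Option.some.injEq, Prod.mk.injEq] at h
      obtain ⟨rfl, rfl, rfl⟩ := h
      exact ⟨[], [], rfl, rfl, List.Forall₂.nil, fun cs₀ ls₀ => by simp [walk]⟩
  | cons b r ih =>
      intro φ cs ls φ' cs' ls' h
      cases φ with
      | atom p => cases b <;> exact absurd h (by simp [walk])
      | neg φ =>
          cases b
          · obtain ⟨Δc, Δl, h1, h2, h3, h4⟩ := ih φ cs ls φ' cs' ls' h
            exact ⟨Δc, Δl, h1, h2, h3, fun cs₀ ls₀ => h4 cs₀ ls₀⟩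
          · exact absurd h (by simp [walk])
      | conj φ₁ φ₂ =>
          cases b
          · obtain ⟨Δc, Δl, h1, h2, h3, h4⟩ := ih φ₁ cs ls φ' cs' ls' h
            exact ⟨Δc, Δl, h1, h2, h3, fun cs₀ ls₀ => h4 cs₀ ls₀⟩
          · obtain ⟨Δc, Δl, h1, h2, h3, h4⟩ := ih φ₂ cs ls φ' cs' ls' h
            exact ⟨Δc, Δl, h1, h2, h3, fun cs₀ ls₀ => h4 cs₀ ls₀⟩
      | dk B φ =>
          cases b
          · obtain ⟨Δc, Δl, h1, h2, h3, h4⟩ := ih φ cs ls φ' cs' ls' h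
            exact ⟨Δc, Δl, h1, h2, h3, fun cs₀ ls₀ => h4 cs₀ ls₀⟩
          · exact absurd h (by simp [walk])
      | cpat CG R hR φ =>
          cases b
          · obtain ⟨Δc, Δl, h1, h2, h3, h4⟩ := ih φ (R :: cs) (CG :: ls) φ' cs' ls' h
            refine ⟨Δc ++ [R], Δl ++ [CG], by simp [h1], by simp [h2],
              List.rel_append h3 (List.forall₂_cons.mpr ⟨hR, List.Forall₂.nil⟩),
              fun cs₀ ls₀ => ?_⟩
            have := h4 (R :: cs₀) (CG :: ls₀)
            simpa [walk] using this
          · exact absurd h (by simp [walk])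

end Walk

section Zones
variable {A : Type}

/-- reserved positions used by the encoding -/
inductive Zone (A : Type) : Type
  | pt : A → Zone A
  | cmark : Zone A
  | cS : A → Zone A
  | cT : A → A → Zone A
  | port : ℕ → List Bool → Zone A
  | tjunk : Zone A
  | tguard : Zone A

open Cardinal in
lemma zone_emb (A : Type) [Infinite A] : Nonempty (Zone A ↪ A) := by
  rw [← Cardinal.le_def]
  have hA : ℵ₀ ≤ #A := Cardinal.aleph0_le_mk A
  have h1 : #(Zone A) ≤ #((A ⊕ (A ⊕ (A × A))) ⊕ ((ℕ × List Bool) ⊕ (Fin 3))) := by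
    refine Cardinal.mk_le_of_injective (f := fun z => match z with
        | .pt c => Sum.inl (Sum.inl c)
        | .cS a => Sum.inl (Sum.inr (Sum.inl a))
        | .cT b a => Sum.inl (Sum.inr (Sum.inr (b, a)))
        | .port i m => Sum.inr (Sum.inl (i, m))
        | .cmark => Sum.inr (Sum.inr 0)
        | .tjunk => Sum.inr (Sum.inr 1)
        | .tguard => Sum.inr (Sum.inr 2)) ?_
    intro z z' h
    cases z <;> cases z' <;> simp_all
  refine h1.trans ?_
  have hsum : ∀ (X Y : Type) , #X ≤ #A → #Y ≤ #A → #(X ⊕ Y) ≤ #A := by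
    intro X Y hX hY
    rw [Cardinal.mk_sum]
    simpa using Cardinal.add_le_of_le hA hX hY
  refine hsum _ _ (hsum _ _ le_rfl (hsum _ _ le_rfl ?_)) (hsum _ _ ?_ ?_)
  · rw [Cardinal.mk_prod]
    simpa using le_of_eq (Cardinal.mul_eq_self hA)
  · exact (Cardinal.mk_le_aleph0).trans hA
  · exact (Cardinal.mk_le_aleph0).trans hA

end Zones

section Enc
variable {A P : Type} (emb : Zone A ↪ A) (F : Form A P)

def codeCol (S : Set A) (U : A → A → Prop) : Set A :=
  {x | x = emb .cmark ∨ (∃ a ∈ S, x = emb (.cS a)) ∨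
    (∃ a ∈ S, ∃ b, U b a ∧ x = emb (.cT b a))}

def gCol (S₀ : Set A) : Set A := {x | x = emb .tguard ∨ ∃ c ∈ S₀, x = emb (.pt c)}

/-- the dk set and full stack represented at target address `m'` by an element
born at `mb` with chosen stack `σb` -/
def stackAt (mb : List Bool) (σb : List (A → A → Prop)) (m' : List Bool) :
    Option (Set A × List (A → A → Prop)) :=
  match walk F [] [] mb, walk F [] [] m' with
  | some (_, csb, _), some (.dk B _, cs', _) =>
      if mb <+: m' then some (B, cs'.take (cs'.length - csb.length) ++ σb) else none
  | _, _ => none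

def portCol (mb : List Bool) (σb : List (A → A → Prop)) : ℕ → List Bool → Set A
  | 0, m' =>
      match stackAt F mb σb m' with
      | some (B, σ') => gCol emb (guardOf B σ')
      | none => {emb Zone.tjunk}
  | i+1, m' =>
      match stackAt F mb σb m' with
      | some (B, σ') =>
          ((σ'.zip (cascL B σ')).map (fun x => codeCol emb x.2 x.1)).getD i {emb Zone.tjunk}
      | none => {emb Zone.tjunk}

noncomputable def encCol (mb : List Bool) (σb : List (A → A → Prop)) (a : A) : Set A :=
  match Function.partialInv emb a with
  | some (.port i m') => portCol emb F mb σb i m'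
  | some .tguard => {emb Zone.tjunk}
  | _ => ∅

noncomputable def encRel (mb : List Bool) (σb : List (A → A → Prop)) : A → A → Prop :=
  fun b a => b ∈ encCol emb F mb σb a

def botRel : A → A → Prop := fun b a => ∃ c, a = emb (Zone.pt c) ∧ b = c

def validB (mb : List Bool) (σb : List (A → A → Prop)) : Prop :=
  ∃ x, walk F [] [] mb = some x ∧ List.Forall₂ (· ∈ ·) σb x.2.2

def CGd : Set (A → A → Prop) :=
  insert (botRel emb) {E | ∃ mb σb, validB F mb σb ∧ E = encRel emb F mb σb}

def tr : Form A P → List Bool → ℕ → Form A P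
  | .atom p, _, _ => .atom p
  | .neg φ, m, k => .neg (tr φ (m ++ [false]) k)
  | .conj φ₁ φ₂, m, k => .conj (tr φ₁ (m ++ [false]) k) (tr φ₂ (m ++ [true]) k)
  | .dk _ φ, m, k =>
      .dk ((fun i => emb (Zone.port i m)) '' {i | i ≤ k}) (tr φ (m ++ [false]) k)
  | .cpat _ _ _ φ, m, k => tr φ (m ++ [false]) (k + 1)

lemma tr_static : ∀ (φ : Form A P) (m : List Bool) (k : ℕ), Static (tr emb φ m k) := by
  intro φ
  induction φ with
  | atom p => exact fun m k => Static.atom p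
  | neg φ ih => exact fun m k => Static.neg (ih _ _)
  | conj φ₁ φ₂ ih1 ih2 => exact fun m k => Static.conj (ih1 _ _) (ih2 _ _)
  | dk B φ ih => exact fun m k => Static.dk (ih _ _)
  | cpat CG R h φ ih => exact fun m k => ih _ _

-- column computation lemmas
lemma encCol_emb (mb σb) (z : Zone A) :
    encCol emb F mb σb (emb z) =
      (match z with
        | .port i m' => portCol emb F mb σb i m'
        | .tguard => {emb Zone.tjunk}
        | _ => (∅ : Set A)) := by
  unfold encCol
  rw [Function.partialInv_left emb.injective]
  cases z <;> rfl

lemma encRel_col (mb σb) (a : A) : {b | encRel emb F mb σb b a} = encCol emb F mb σb a :=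
  Set.setOf_mem_eq

lemma bot_col (a : A) : {b | botRel emb b a} =
    (match Function.partialInv emb a with
      | some (.pt c) => ({c} : Set A)
      | _ => ∅) := by
  ext b
  simp only [Set.mem_setOf_eq, botRel]
  constructor
  · rintro ⟨c, rfl, rfl⟩
    rw [Function.partialInv_left emb.injective]
    exact rfl
  · intro hb
    rcases h : Function.partialInv emb a with _ | z
    · rw [h] at hb; cases hb
    · rw [h] at hb
      have ha : emb z = a := (Function.partialInv_of_injective emb.injective z a).mp h
      cases z with
      | pt c => exact ⟨c, ha ▸ rfl, hb⟩
      | cmark => cases hb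
      | cS a' => cases hb
      | cT b' a' => cases hb
      | port i m' => cases hb
      | tjunk => cases hb
      | tguard => cases hb

lemma bot_col_pt (c : A) : {b | botRel emb b (emb (.pt c))} = ({c} : Set A) := by
  rw [bot_col]; rw [Function.partialInv_left emb.injective]


lemma mem_codeCol_cS {S : Set A} {U : A → A → Prop} (a : A) :
    emb (.cS a) ∈ codeCol emb S U ↔ a ∈ S := by
  unfold codeCol
  simp only [Set.mem_setOf_eq]
  constructor
  · rintro (h | ⟨a', ha', h⟩ | ⟨a', ha', b', hb', h⟩)
    · exact absurd (emb.injective h) (by simp)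
    · obtain rfl : a = a' := by simpa using emb.injective h
      exact ha'
    · exact absurd (emb.injective h) (by simp)
  · intro ha
    exact Or.inr (Or.inl ⟨a, ha, rfl⟩)

lemma mem_codeCol_cT {S : Set A} {U : A → A → Prop} (b a : A) :
    emb (.cT b a) ∈ codeCol emb S U ↔ (a ∈ S ∧ U b a) := by
  unfold codeCol
  simp only [Set.mem_setOf_eq]
  constructor
  · rintro (h | ⟨a', ha', h⟩ | ⟨a', ha', b', hb', h⟩)
    · exact absurd (emb.injective h) (by simp)
    · exact absurd (emb.injective h) (by simp)
    · obtain ⟨h1, h2⟩ := (Zone.cT.injEq _ _ _ _).mp (emb.injective h)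
      subst h1; subst h2
      exact ⟨ha', hb'⟩
  · rintro ⟨ha, hU⟩
    exact Or.inr (Or.inr ⟨a, ha, b, hU, rfl⟩)

lemma codeCol_inj {S S' : Set A} {U U' : A → A → Prop}
    (h : codeCol emb S U = codeCol emb S' U') :
    S = S' ∧ ∀ a ∈ S, {b | U b a} = {b | U' b a} := by
  have hS : S = S' := by
    ext a
    rw [← mem_codeCol_cS emb a (U := U), ← mem_codeCol_cS emb a (U := U'), h]
  subst hS
  refine ⟨rfl, fun a ha => ?_⟩
  ext b
  simp only [Set.mem_setOf_eq]
  rw [show U b a ↔ (a ∈ S ∧ U b a) from (and_iff_right ha).symm,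
    show U' b a ↔ (a ∈ S ∧ U' b a) from (and_iff_right ha).symm,
    ← mem_codeCol_cT emb b a (U := U), ← mem_codeCol_cT emb b a (U := U'), h]

lemma codeCol_congr {S : Set A} {U V : A → A → Prop}
    (h : ∀ a ∈ S, {b | U b a} = {b | V b a}) : codeCol emb S U = codeCol emb S V := by
  unfold codeCol
  ext x
  simp only [Set.mem_setOf_eq]
  refine or_congr Iff.rfl (or_congr Iff.rfl ?_)
  constructor
  · rintro ⟨a, ha, b, hU, rfl⟩
    exact ⟨a, ha, b, (Set.ext_iff.mp (h a ha) b).mp hU, rfl⟩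
  · rintro ⟨a, ha, b, hV, rfl⟩
    exact ⟨a, ha, b, (Set.ext_iff.mp (h a ha) b).mpr hV, rfl⟩

lemma colU_congr {B : Set A} {U V : A → A → Prop}
    (h : ∀ a ∈ B, {b | U b a} = {b | V b a}) : colU U B = colU V B := by
  unfold colU
  ext b
  constructor
  · rintro ⟨a, ha, hU⟩
    exact ⟨a, ha, (Set.ext_iff.mp (h a ha) b).mp hU⟩
  · rintro ⟨a, ha, hV⟩
    exact ⟨a, ha, (Set.ext_iff.mp (h a ha) b).mpr hV⟩

lemma cascL_len : ∀ (σ : List (A → A → Prop)) (B : Set A), (cascL B σ).length = σ.length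
  | [], _ => rfl
  | U :: σ, B => by simp [cascL, cascL_len σ]

lemma zip_guard : ∀ (σ σ' : List (A → A → Prop)) (B : Set A),
    zipCond B σ σ' → guardOf B σ = guardOf B σ'
  | [], [], B, _ => rfl
  | U :: σ, V :: σ', B, h => by
      simp only [guardOf]
      rw [show colU U B = colU V B from colU_congr h.1]
      exact zip_guard σ σ' _ (by rw [show colU V B = colU U B from (colU_congr h.1).symm]; exact h.2)
  | [], _ :: _, B, h => absurd h (by simp [zipCond])
  | _ :: _, [], B, h => absurd h (by simp [zipCond])

lemma codes_iff : ∀ (σ σ' : List (A → A → Prop)) (B : Set A), σ.length = σ'.length →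
    (((σ.zip (cascL B σ)).map fun x => codeCol emb x.2 x.1) =
     ((σ'.zip (cascL B σ')).map fun x => codeCol emb x.2 x.1) ↔ zipCond B σ σ') := by
  intro σ
  induction σ with
  | nil =>
      intro σ' B hlen
      cases σ' with
      | nil => simp [zipCond]
      | cons V σ' => simp at hlen
  | cons U σ ih =>
      intro σ' B hlen
      cases σ' with
      | nil => simp at hlen
      | cons V σ' =>
          simp only [cascL, List.zip_cons_cons, List.map_cons, List.cons.injEq, zipCond]
          constructor
          · rintro ⟨h1, h2⟩
            obtain ⟨-, hcols⟩ := codeCol_inj emb h1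
            have hcolU : colU V B = colU U B := (colU_congr hcols).symm
            rw [hcolU] at h2
            exact ⟨hcols, (ih σ' (colU U B) (by simpa using hlen)).mp h2⟩
          · rintro ⟨h1, h2⟩
            have hcolU : colU V B = colU U B := (colU_congr h1).symm
            rw [hcolU]
            exact ⟨codeCol_congr emb h1, (ih σ' (colU U B) (by simpa using hlen)).mpr h2⟩

def portsSet (m : List Bool) (k : ℕ) : Set A := (fun i => emb (Zone.port i m)) '' {i | i ≤ k}

lemma bot_colU (X : Set A) : colU (botRel emb) X = {c | emb (.pt c) ∈ X} := by
  unfold colU botRel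
  ext b
  simp only [Set.mem_setOf_eq]
  constructor
  · rintro ⟨a, ha, c, rfl, rfl⟩
    exact ha
  · intro hb
    exact ⟨emb (.pt b), hb, b, rfl, rfl⟩

lemma colU_enc_ports (mb : List Bool) (σb : List (A → A → Prop)) (m : List Bool) (k : ℕ) :
    colU (encRel emb F mb σb) (portsSet emb m k) =
      {b | ∃ i ≤ k, b ∈ portCol emb F mb σb i m} := by
  unfold colU portsSet
  ext b
  simp only [Set.mem_setOf_eq, Set.mem_image]
  constructor
  · rintro ⟨a, ⟨i, hi, rfl⟩, hb⟩
    refine ⟨i, hi, ?_⟩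
    have := encCol_emb emb F mb σb (Zone.port i m)
    simpa [encRel, this] using hb
  · rintro ⟨i, hi, hb⟩
    refine ⟨emb (Zone.port i m), ⟨i, hi, rfl⟩, ?_⟩
    have := encCol_emb emb F mb σb (Zone.port i m)
    simpa [encRel, this] using hb

lemma guard_compute (mb : List Bool) (σb : List (A → A → Prop)) (m : List Bool)
    {B : Set A} {σ' : List (A → A → Prop)}
    (hdef : stackAt F mb σb m = some (B, σ')) :
    colU (botRel emb) (colU (encRel emb F mb σb) (portsSet emb m σ'.length)) =
      guardOf B σ' := by
  rw [colU_enc_ports, bot_colU]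
  ext c
  simp only [Set.mem_setOf_eq]
  constructor
  · rintro ⟨i, hi, hmem⟩
    cases i with
    | zero =>
        simp only [portCol, hdef] at hmem
        rcases hmem with h | ⟨c', hc', h⟩
        · exact absurd (emb.injective h) (by simp)
        · rwa [show c = c' from by simpa using emb.injective h]
    | succ j =>
        exfalso
        simp only [portCol, hdef] at hmem
        rcases hj : ((σ'.zip (cascL B σ')).map fun x => codeCol emb x.2 x.1).getD j {emb Zone.tjunk} with X
        rw [hj] at hmem
        by_cases hjl : j < ((σ'.zip (cascL B σ')).map fun x => codeCol emb x.2 x.1).length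
        · rw [List.getD_eq_getElem _ _ hjl] at hj
          have : emb (Zone.pt c) ∈ (((σ'.zip (cascL B σ')).map fun x => codeCol emb x.2 x.1))[j] := hj ▸ hmem
          simp only [List.getElem_map] at this
          rcases this with h | ⟨a, ha, h⟩ | ⟨a, ha, b, hb, h⟩
          · exact absurd (emb.injective h) (by simp)
          · exact absurd (emb.injective h) (by simp)
          · exact absurd (emb.injective h) (by simp)
        · rw [List.getD_eq_default _ _ (by omega)] at hj
          subst hj
          exact absurd (emb.injective hmem) (by simp)
  · intro hc
    refine ⟨0, Nat.zero_le _, ?_⟩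
    simp only [portCol, hdef]
    exact Or.inr ⟨c, hc, rfl⟩


lemma enc_mem {mb σb} (h : validB F mb σb) : encRel emb F mb σb ∈ CGd emb F :=
  Set.mem_insert_iff.mpr (Or.inr ⟨mb, σb, h, rfl⟩)

lemma bot_mem : botRel emb ∈ CGd emb F := Set.mem_insert _ _

/-- the simulation world -/
noncomputable def simW {M : EM A P} (E₂ : A → A → Prop) (hE : E₂ ∈ CGd emb F) (v : M.W) :
    (updates M [CGd emb F, CGd emb F]).W :=
  mkW [E₂, botRel emb] [CGd emb F, CGd emb F]
    (List.forall₂_cons.mpr ⟨hE, List.forall₂_cons.mpr ⟨bot_mem emb F, List.Forall₂.nil⟩⟩) v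


lemma sat_congr_list {M : EM A P} {L L' : List (Set (A → A → Prop))} (h : L = L')
    {V : List (A → A → Prop)} (hV : List.Forall₂ (· ∈ ·) V L)
    (hV' : List.Forall₂ (· ∈ ·) V L') (v : M.W) (φ : Form A P) :
    Sat φ (updates M L) (mkW V L hV v) ↔ Sat φ (updates M L') (mkW V L' hV' v) := by
  subst h; exact Iff.rfl

lemma walk_len {mb : List Bool} {φb csb lsb} (hbw : walk F [] [] mb = some (φb, csb, lsb)) :
    csb.length = lsb.length := by
  obtain ⟨Δc, Δl, h1, h2, h3, -⟩ := walk_mono mb F [] [] φb csb lsb hbw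
  simp only [List.append_nil] at h1 h2
  subst h1; subst h2
  exact h3.length_eq

lemma portCol_zero {mb σb m'} {B : Set A} {σ' : List (A → A → Prop)}
    (hdef : stackAt F mb σb m' = some (B, σ')) :
    portCol emb F mb σb 0 m' = gCol emb (guardOf B σ') := by
  simp [portCol, hdef]

lemma portCol_succ {mb σb m'} {B : Set A} {σ' : List (A → A → Prop)}
    (hdef : stackAt F mb σb m' = some (B, σ')) (i : ℕ) :
    portCol emb F mb σb (i+1) m' =
      ((σ'.zip (cascL B σ')).map fun x => codeCol emb x.2 x.1).getD i {emb Zone.tjunk} := by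
  simp [portCol, hdef]

lemma codesList_len (σ' : List (A → A → Prop)) (B : Set A) :
    ((σ'.zip (cascL B σ')).map fun x => codeCol emb x.2 x.1).length = σ'.length := by
  simp [cascL_len]

lemma codesList_getD_cmark {σ' : List (A → A → Prop)} {B : Set A} (i : ℕ)
    (hi : i < σ'.length) :
    emb Zone.cmark ∈
      ((σ'.zip (cascL B σ')).map fun x => codeCol emb x.2 x.1).getD i {emb Zone.tjunk} := by
  rw [List.getD_eq_getElem _ _ (by rw [codesList_len]; omega)]
  simp only [List.getElem_map]
  exact Or.inl rfl

lemma mem_gCol_tguard (S : Set A) : emb Zone.tguard ∈ gCol emb S := Or.inl rfl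

lemma tguard_mem_emission {mb σb m'} {B : Set A} {σ' : List (A → A → Prop)}
    (hdef : stackAt F mb σb m' = some (B, σ')) (k : ℕ) :
    emb Zone.tguard ∈ colU (encRel emb F mb σb) (portsSet emb m' k) := by
  rw [colU_enc_ports]
  exact ⟨0, Nat.zero_le _, by rw [portCol_zero emb F hdef]; exact mem_gCol_tguard emb _⟩

lemma getD_lists_eq {α : Type*} (d : α) (l l' : List α) (hlen : l.length = l'.length)
    (h : ∀ i < l.length, l.getD i d = l'.getD i d) : l = l' := by
  apply List.ext_getElem hlen
  intro i h1 h2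
  have := h i h1
  rwa [List.getD_eq_getElem _ _ h1, List.getD_eq_getElem _ _ h2] at this


lemma encCol_tguard (mb σb) :
    encCol emb F mb σb (emb Zone.tguard) = {emb Zone.tjunk} := by rw [encCol_emb]

lemma encCol_port (mb σb) (i m') :
    encCol emb F mb σb (emb (Zone.port i m')) = portCol emb F mb σb i m' := by rw [encCol_emb]

lemma bot_col_tguard : {b | botRel emb b (emb Zone.tguard)} = (∅ : Set A) := by
  rw [bot_col, Function.partialInv_left emb.injective]

lemma bot_col_port (i m') : {b | botRel emb b (emb (Zone.port i m'))} = (∅ : Set A) := by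
  rw [bot_col, Function.partialInv_left emb.injective]

theorem main (M : EM A P) :
    ∀ (φ : Form A P) (m mb : List Bool) (Δc σb : List (A → A → Prop))
      (Δl lsb : List (Set (A → A → Prop))) (φb : Form A P) (csb : List (A → A → Prop))
      (hbw : walk F [] [] mb = some (φb, csb, lsb))
      (hw : walk F [] [] m = some (φ, Δc ++ csb, Δl ++ lsb))
      (hpre : mb <+: m)
      (hΔ : List.Forall₂ (· ∈ ·) Δc Δl) (hσb : List.Forall₂ (· ∈ ·) σb lsb)
      (hlen : csb.length = lsb.length)
      (hne : Δl ++ lsb ≠ []) (v : M.W),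
      Sat φ (updates M (Δl ++ lsb)) (mkW (Δc ++ σb) (Δl ++ lsb) (List.rel_append hΔ hσb) v) ↔
      Sat (tr emb φ m (Δl ++ lsb).length) (updates M [CGd emb F, CGd emb F])
        (simW emb F (encRel emb F mb σb) (enc_mem emb F ⟨(φb, csb, lsb), hbw, hσb⟩) v) := by
  intro φ
  induction φ with
  | atom p =>
      intro m mb Δc σb Δl lsb φb csb hbw hw hpre hΔ hσb hlen hne v
      show p ∈ (updates M (Δl ++ lsb)).L _ ↔ p ∈ (updates M [CGd emb F, CGd emb F]).L _
      unfold simW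
      rw [updates_L, updates_L]
  | neg φ ih =>
      intro m mb Δc σb Δl lsb φb csb hbw hw hpre hΔ hσb hlen hne v
      have hw' : walk F [] [] (m ++ [false]) = some (φ, Δc ++ csb, Δl ++ lsb) := by
        simp [walk_append, hw, walk]
      exact not_congr (ih (m ++ [false]) mb Δc σb Δl lsb φb csb hbw hw'
        (hpre.trans (List.prefix_append m [false])) hΔ hσb hlen hne v)
  | conj φ₁ φ₂ ih1 ih2 =>
      intro m mb Δc σb Δl lsb φb csb hbw hw hpre hΔ hσb hlen hne v
      have hw1 : walk F [] [] (m ++ [false]) = some (φ₁, Δc ++ csb, Δl ++ lsb) := by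
        simp [walk_append, hw, walk]
      have hw2 : walk F [] [] (m ++ [true]) = some (φ₂, Δc ++ csb, Δl ++ lsb) := by
        simp [walk_append, hw, walk]
      exact and_congr
        (ih1 (m ++ [false]) mb Δc σb Δl lsb φb csb hbw hw1
          (hpre.trans (List.prefix_append m [false])) hΔ hσb hlen hne v)
        (ih2 (m ++ [true]) mb Δc σb Δl lsb φb csb hbw hw2
          (hpre.trans (List.prefix_append m [true])) hΔ hσb hlen hne v)
  | cpat CG' R' h' φ ih =>
      intro m mb Δc σb Δl lsb φb csb hbw hw hpre hΔ hσb hlen hne v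
      have hw' : walk F [] [] (m ++ [false]) =
          some (φ, (R' :: Δc) ++ csb, (CG' :: Δl) ++ lsb) := by
        simp [walk_append, hw, walk]
      have := ih (m ++ [false]) mb (R' :: Δc) σb (CG' :: Δl) lsb φb csb hbw hw'
        (hpre.trans (List.prefix_append m [false]))
        (List.forall₂_cons.mpr ⟨h', hΔ⟩) hσb hlen (by simp) v
      exact this
  | dk B φ ih =>
      intro m mb Δc σb Δl lsb φb csb hbw hw hpre hΔ hσb hlen hne v
      have hU := List.rel_append hΔ hσb
      have hcslen : (Δc ++ csb).length = (Δl ++ lsb).length := by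
        simp [hΔ.length_eq, hlen]
      have hUlen : (Δc ++ σb).length = (Δl ++ lsb).length := hU.length_eq
      have hk1 : 1 ≤ (Δl ++ lsb).length := by
        cases h : Δl ++ lsb with
        | nil => exact absurd h hne
        | cons _ _ => simp [h]
      have htake : (Δc ++ csb).take ((Δc ++ csb).length - csb.length) = Δc := by
        have h : (Δc ++ csb).length - csb.length = Δc.length := by simp
        rw [h, List.take_left]
      have hdefm : stackAt F mb σb m = some (B, Δc ++ σb) := by
        simp only [stackAt, hbw, hw]
        rw [if_pos hpre, htake]
      have hguard : guardOf (portsSet emb m (Δl ++ lsb).length)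
          [encRel emb F mb σb, botRel emb] = guardOf B (Δc ++ σb) := by
        simp only [guardOf]
        rw [← hUlen]
        exact guard_compute emb F mb σb m hdefm
      have lhs : Sat (Form.dk B φ) (updates M (Δl ++ lsb))
          (mkW (Δc ++ σb) (Δl ++ lsb) hU v) ↔
          ∀ V (hV : List.Forall₂ (· ∈ ·) V (Δl ++ lsb)) v', zipCond B (Δc ++ σb) V →
            (∀ c ∈ guardOf B (Δc ++ σb), M.sim c v v') →
            Sat φ (updates M (Δl ++ lsb)) (mkW V (Δl ++ lsb) hV v') := by
        show (∀ y, _ → _) ↔ _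
        constructor
        · intro H V hV v' h1 h2
          exact H (mkW V _ hV v') ((sim_iff hU hV v v' B).mpr ⟨h1, h2⟩)
        · intro H y hy
          obtain ⟨V, hV, v', rfl⟩ := mkW_surj y
          obtain ⟨h1, h2⟩ := (sim_iff hU hV v v' B).mp hy
          exact H V hV v' h1 h2
      have henc_mem : encRel emb F mb σb ∈ CGd emb F :=
        enc_mem emb F ⟨(φb, csb, lsb), hbw, hσb⟩
      have rhs : Sat (tr emb (Form.dk B φ) m (Δl ++ lsb).length)
          (updates M [CGd emb F, CGd emb F]) (simW emb F _ henc_mem v) ↔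
          ∀ E₂ (hE₂ : E₂ ∈ CGd emb F) E₁ (hE₁ : E₁ ∈ CGd emb F) v',
            zipCond (portsSet emb m (Δl ++ lsb).length)
              [encRel emb F mb σb, botRel emb] [E₂, E₁] →
            (∀ c ∈ guardOf (portsSet emb m (Δl ++ lsb).length)
              [encRel emb F mb σb, botRel emb], M.sim c v v') →
            Sat (tr emb φ (m ++ [false]) (Δl ++ lsb).length)
              (updates M [CGd emb F, CGd emb F])
              (mkW [E₂, E₁] [CGd emb F, CGd emb F]
                (List.forall₂_cons.mpr ⟨hE₂,
                  List.forall₂_cons.mpr ⟨hE₁, List.Forall₂.nil⟩⟩) v') := by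
        show (∀ y, _ → _) ↔ _
        constructor
        · intro H E₂ hE₂ E₁ hE₁ v' h1 h2
          exact H (mkW [E₂, E₁] _ _ v') ((sim_iff _ _ v v' _).mpr ⟨h1, h2⟩)
        · intro H y hy
          obtain ⟨V, hV, v', rfl⟩ := mkW_surj y
          cases V with
          | nil => exact absurd hV (by simp)
          | cons E₂ V' =>
            cases V' with
            | nil => exact absurd hV (by simp)
            | cons E₁ V'' =>
              cases V'' with
              | cons _ _ => exact absurd hV (by simp)
              | nil =>
                obtain ⟨h1, h2⟩ := (sim_iff _ hV v v' _).mp hy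
                exact H E₂ (List.forall₂_cons.mp hV).1 E₁
                  (List.forall₂_cons.mp (List.forall₂_cons.mp hV).2).1 v' h1 h2
      rw [lhs, rhs]
      constructor
      · intro H E₂ hE₂ E₁ hE₁ v' hz hg
        simp only [zipCond, and_true] at hz
        obtain ⟨hz1, hz2⟩ := hz
        have hE₁bot : E₁ = botRel emb := by
          rcases Set.mem_insert_iff.mp hE₁ with h | ⟨m₃, σ₃, hv₃, rfl⟩
          · exact h
          · exfalso
            have hmem := tguard_mem_emission emb F hdefm (Δl ++ lsb).length
            have hcols := hz2 _ hmem
            rw [bot_col_tguard, encRel_col, encCol_tguard] at hcols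
            have : emb Zone.tjunk ∈ (∅ : Set A) := by rw [hcols]; rfl
            exact this
        subst hE₁bot
        rcases Set.mem_insert_iff.mp hE₂ with rfl | ⟨m₂, σ₂, hv₂, rfl⟩
        · exfalso
          have hp1 : emb (Zone.port 1 m) ∈ portsSet emb m (Δl ++ lsb).length :=
            ⟨1, hk1, rfl⟩
          have hcols := hz1 _ hp1
          rw [encRel_col, encCol_port, bot_col_port, portCol_succ emb F hdefm 0] at hcols
          have hmem := codesList_getD_cmark emb (σ' := Δc ++ σb) (B := B) 0
            (by rw [hUlen]; omega)
          rw [hcols] at hmem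
          exact hmem
        · obtain ⟨⟨φ₂, csb₂, lsb₂⟩, hbw₂, hσ₂⟩ := hv₂
          have hpre₂ : m₂ <+: m := by
            by_contra hnp
            have hdef₂ : stackAt F m₂ σ₂ m = none := by
              simp only [stackAt, hbw₂, hw]
              rw [if_neg hnp]
            have hp0 : emb (Zone.port 0 m) ∈ portsSet emb m (Δl ++ lsb).length :=
              ⟨0, Nat.zero_le _, rfl⟩
            have hcols := hz1 _ hp0
            rw [encRel_col, encCol_port, encRel_col, encCol_port,
              portCol_zero emb F hdefm,
              show portCol emb F m₂ σ₂ 0 m = {emb Zone.tjunk} from by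
                simp [portCol, hdef₂]] at hcols
            have hmem := hcols ▸ mem_gCol_tguard emb (guardOf B (Δc ++ σb))
            exact absurd (emb.injective hmem) (by simp)
          obtain ⟨rest, rfl⟩ := hpre₂
          have hw₂m : walk F [] [] (m₂ ++ rest) =
              some (Form.dk B φ, Δc ++ csb, Δl ++ lsb) := hw
          rw [walk_append, hbw₂] at hw₂m
          simp only [Option.bind_some] at hw₂m
          obtain ⟨Δc₂, Δl₂, he1, he2, hΔ₂, -⟩ :=
            walk_mono rest φ₂ csb₂ lsb₂ _ _ _ hw₂m
          have hlen₂ := walk_len F hbw₂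
          have htake₂ : (Δc ++ csb).take ((Δc ++ csb).length - csb₂.length) = Δc₂ := by
            rw [he1]
            have h : (Δc₂ ++ csb₂).length - csb₂.length = Δc₂.length := by simp
            rw [h, List.take_left]
          have hdef₂ : stackAt F m₂ σ₂ (m₂ ++ rest) = some (B, Δc₂ ++ σ₂) := by
            simp only [stackAt, hbw₂, hw]
            rw [if_pos ⟨rest, rfl⟩, htake₂]
          have hV : List.Forall₂ (· ∈ ·) (Δc₂ ++ σ₂) (Δl ++ lsb) := by
            rw [he2]; exact List.rel_append hΔ₂ hσ₂
          have hVlen : (Δc ++ σb).length = (Δc₂ ++ σ₂).length := by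
            rw [hV.length_eq, hUlen]
          have hcodes : ((Δc ++ σb).zip (cascL B (Δc ++ σb))).map
              (fun x => codeCol emb x.2 x.1) =
              ((Δc₂ ++ σ₂).zip (cascL B (Δc₂ ++ σ₂))).map
              (fun x => codeCol emb x.2 x.1) := by
            apply getD_lists_eq {emb Zone.tjunk}
            · rw [codesList_len, codesList_len, hVlen]
            · intro i hi
              rw [codesList_len] at hi
              have hi' : i + 1 ≤ (Δl ++ lsb).length := by rw [← hUlen]; omega
              have hp : emb (Zone.port (i+1) (m₂ ++ rest)) ∈
                  portsSet emb (m₂ ++ rest) (Δl ++ lsb).length := ⟨i+1, hi', rfl⟩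
              have hcols := hz1 _ hp
              rw [encRel_col, encCol_port, encRel_col, encCol_port,
                portCol_succ emb F hdefm i, portCol_succ emb F hdef₂ i] at hcols
              exact hcols
          have hzipUV : zipCond B (Δc ++ σb) (Δc₂ ++ σ₂) :=
            (codes_iff emb _ _ B hVlen).mp hcodes
          have hguardUV : guardOf B (Δc ++ σb) = guardOf B (Δc₂ ++ σ₂) :=
            zip_guard _ _ _ hzipUV
          rw [hguard] at hg
          have hreal := H (Δc₂ ++ σ₂) hV v' hzipUV hg
          have hwchild : walk F [] [] ((m₂ ++ rest) ++ [false]) =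
              some (φ, Δc₂ ++ csb₂, Δl₂ ++ lsb₂) := by
            rw [walk_append, hw]
            simp only [Option.bind_some]
            simp [walk, ← he1, ← he2]
          have hIH := ih ((m₂ ++ rest) ++ [false]) m₂ Δc₂ σ₂ Δl₂ lsb₂ φ₂ csb₂ hbw₂
            hwchild ⟨rest ++ [false], by simp⟩ hΔ₂ hσ₂ hlen₂
            (by rw [← he2]; exact hne) v'
          have hlenEq : (Δl ++ lsb).length = (Δl₂ ++ lsb₂).length := by rw [he2]
          have hreal' := (sat_congr_list he2 hV (he2 ▸ hV) v' φ).mp hreal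
          rw [hlenEq]
          exact hIH.mp hreal'
      · intro H V hV v' hzipUV hgUV
        have hvm : validB F m V := ⟨(Form.dk B φ, Δc ++ csb, Δl ++ lsb), hw, hV⟩
        have hdefV : stackAt F m V m = some (B, V) := by
          simp only [stackAt, hw]
          rw [if_pos (List.prefix_refl m)]
          simp
        have hVlen : (Δc ++ σb).length = V.length := by
          rw [hV.length_eq, hUlen]
        have hguardUV : guardOf B (Δc ++ σb) = guardOf B V := zip_guard _ _ _ hzipUV
        have hz1 : ∀ a ∈ portsSet emb m (Δl ++ lsb).length,
            {b | encRel emb F mb σb b a} = {b | encRel emb F m V b a} := by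
          rintro a ⟨i, hi, rfl⟩
          rw [encRel_col, encCol_port, encRel_col, encCol_port]
          cases i with
          | zero => rw [portCol_zero emb F hdefm, portCol_zero emb F hdefV, hguardUV]
          | succ j =>
              rw [portCol_succ emb F hdefm j, portCol_succ emb F hdefV j,
                (codes_iff emb _ _ B hVlen).mpr hzipUV]
        have happly := H (encRel emb F m V) (enc_mem emb F hvm) (botRel emb)
          (bot_mem emb F) v'
          (by
            simp only [zipCond, and_true]
            exact ⟨hz1, by simp⟩)
          (by rw [hguard]; exact hgUV)
        have hwchild : walk F [] [] (m ++ [false]) =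
            some (φ, Δc ++ csb, Δl ++ lsb) := by
          rw [walk_append, hw]
          simp [walk]
        have hIH := ih (m ++ [false]) m [] V [] (Δl ++ lsb) (Form.dk B φ)
          (Δc ++ csb) hw hwchild (List.prefix_append m [false]) List.Forall₂.nil hV
          hcslen hne v'
        exact hIH.mpr happly


end Enc

section InfCase
variable {A P : Type} [Infinite A]

theorem inf_cpat (CG₀ : Set (A → A → Prop)) (R₀ : A → A → Prop) (h₀ : R₀ ∈ CG₀)
    (f₀ : Form A P) :
    ∃ g : Form A P, IUNF g ∧ ∀ (M : EM A P) (w : M.W),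
      Sat (Form.cpat CG₀ R₀ h₀ f₀) M w ↔ Sat g M w := by
  obtain ⟨emb⟩ := zone_emb A
  set F : Form A P := Form.cpat CG₀ R₀ h₀ f₀ with hF
  have hbw : walk F [] [] [] = some (F, [], []) := rfl
  have hσb : List.Forall₂ (· ∈ ·) ([] : List (A → A → Prop)) ([] : List (Set (A → A → Prop))) :=
    List.Forall₂.nil
  have hvb : validB F [] [] := ⟨(F, [], []), hbw, hσb⟩
  refine ⟨Form.cpat (CGd emb F) (botRel emb) (bot_mem emb F)
      (Form.cpat (CGd emb F) (encRel emb F [] []) (enc_mem emb F hvb)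
        (tr emb f₀ [false] 1)),
    IUNF.chain (CGd emb F)
      (Chain.step _ _ (Chain.step _ _ (Chain.base (tr_static emb f₀ [false] 1)))),
    fun M w => ?_⟩
  have hw : walk F [] [] [false] = some (f₀, [R₀] ++ [], [CG₀] ++ []) := by
    simp [walk, hF]
  have hmain := main emb F M f₀ [false] [] [R₀] [] [CG₀] [] F [] hbw hw
    List.nil_prefix (List.forall₂_cons.mpr ⟨h₀, List.Forall₂.nil⟩)
    List.Forall₂.nil rfl (by simp) w
  exact hmain

end InfCase

/-- Every formula of communication pattern logic is logically equivalent to one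
in iterated update normal form. -/
theorem iunf_normal_form (A P : Type) (f : Form A P) :
    ∃ g : Form A P, IUNF g ∧ ∀ (M : EM A P) (w : M.W), Sat f M w ↔ Sat g M w := by
  cases finite_or_infinite A with
  | inl hfin =>
      obtain ⟨s, hs, he⟩ := finite_static f
      exact ⟨s, IUNF.chain ∅ (Chain.base hs), he⟩
  | inr hinf =>
      induction f with
      | atom p => exact ⟨.atom p, IUNF.atom p, fun M w => Iff.rfl⟩
      | neg f ih =>
          obtain ⟨g, hg, he⟩ := ih
          exact ⟨.neg g, IUNF.neg hg, fun M w => not_congr (he M w)⟩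
      | conj f1 f2 ih1 ih2 =>
          obtain ⟨g1, hg1, he1⟩ := ih1
          obtain ⟨g2, hg2, he2⟩ := ih2
          exact ⟨.conj g1 g2, IUNF.conj hg1 hg2,
            fun M w => and_congr (he1 M w) (he2 M w)⟩
      | dk B f ih =>
          obtain ⟨g, hg, he⟩ := ih
          exact ⟨.dk B g, IUNF.dk hg,
            fun M w => forall_congr' fun v => imp_congr Iff.rfl (he M v)⟩
      | cpat CG R h f _ => exact inf_cpat CG R h f

end Stmt17
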